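/- Let E be a real Banach lattice and let T : E → E be a positive bounded linear operator which is mean ergodic with mean ergodic projection 0 (the Cesàro means (1/n) · Σ_{k=0}^{n-1} T^k x converge in norm to 0 for every x ∈ E). Let T* denote the adjoint operator on the continuous dual E'. Then for every real λ with |λ| = 1, the only functional φ ∈ E' satisfying T* φ = λ · φ is φ = 0. -/

import Mathlib

open Filter

/-- Let `E` be a real Banach lattice and `T : E → E` a positive bounded
linear operator which is mean ergodic with mean ergodic projection `0`. Then for every
real `λ` with `|λ| = 1`, the only continuous functional `φ` with `T* φ = λ • φ`
(where `T* φ = φ ∘ T`) is `φ = 0`. -/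
theorem adjoint_has_no_unimodular_eigenvalues
    (E : Type*) [NormedAddCommGroup E] [Lattice E] [HasSolidNorm E]
    [IsOrderedAddMonoid E] [NormedSpace ℝ E] [CompleteSpace E]
    [PosSMulStrictMono ℝ E] [PosSMulReflectLT ℝ E]
    (T : E →L[ℝ] E)
    (hpos : ∀ x : E, 0 ≤ x → 0 ≤ T x)
    (hme : ∀ x : E,
      Tendsto (fun n : ℕ => (n : ℝ)⁻¹ • ∑ k ∈ Finset.range n, (T ^ k) x) atTop (nhds 0))
    (l : ℝ) (hl : |l| = 1) (φ : E →L[ℝ] ℝ) (hφ : φ.comp T = l • φ) :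
    φ = 0 := by
  have hT : ∀ y, φ (T y) = l * φ y := fun y => by
    have := congrFun (congrArg DFunLike.coe hφ) y
    simpa using this
  have hl2 : l * l = 1 := by
    rcases abs_eq (by norm_num : (0:ℝ) ≤ 1) |>.mp hl with h | h <;> rw [h] <;> ring
  have hpow : ∀ (k : ℕ) (y : E), φ ((T ^ k) y) = l ^ k * φ y := by
    intro k
    induction k with
    | zero => intro y; simp
    | succ n ih =>
      intro y
      rw [pow_succ, pow_succ]
      simp only [ContinuousLinearMap.mul_apply]
      rw [ih (T y), hT y]; ring
  have hTk : ∀ (k : ℕ) {x : E}, 0 ≤ x → 0 ≤ (T ^ k) x := by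
    intro k
    induction k with
    | zero => intro x hx; simpa using hx
    | succ n ih =>
      intro x hx
      rw [pow_succ]
      exact ih (hpos x hx)
  have key : ∀ x : E, 0 ≤ x → φ x = 0 := by
    intro x hx
    -- φ x equals φ of the twisted means
    have heq : ∀ n : ℕ, 0 < n →
        φ ((n : ℝ)⁻¹ • ∑ k ∈ Finset.range n, l ^ k • (T ^ k) x) = φ x := by
      intro n hn
      rw [map_smul, map_sum]
      have : ∀ k ∈ Finset.range n, φ (l ^ k • (T ^ k) x) = φ x := by
        intro k _
        rw [map_smul, hpow k x, smul_eq_mul, ← mul_assoc, ← mul_pow, hl2, one_pow, one_mul]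
      rw [Finset.sum_congr rfl this, Finset.sum_const, Finset.card_range]
      rw [nsmul_eq_mul, smul_eq_mul, ← mul_assoc, inv_mul_cancel₀ (Nat.cast_ne_zero.mpr hn.ne'), one_mul]
    -- norm bound
    have hbound : ∀ n : ℕ, |φ x| ≤ ‖φ‖ * ‖(n : ℝ)⁻¹ • ∑ k ∈ Finset.range n, (T ^ k) x‖ ∨ n = 0 := by
      intro n
      rcases Nat.eq_zero_or_pos n with h0 | hn
      · exact Or.inr h0
      left
      calc |φ x| = |φ ((n : ℝ)⁻¹ • ∑ k ∈ Finset.range n, l ^ k • (T ^ k) x)| := by rw [heq n hn]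
        _ ≤ ‖φ‖ * ‖(n : ℝ)⁻¹ • ∑ k ∈ Finset.range n, l ^ k • (T ^ k) x‖ := φ.le_opNorm _
        _ ≤ ‖φ‖ * ‖(n : ℝ)⁻¹ • ∑ k ∈ Finset.range n, (T ^ k) x‖ := by
            refine mul_le_mul_of_nonneg_left ?_ (norm_nonneg φ)
            rw [norm_smul, norm_smul]
            refine mul_le_mul_of_nonneg_left ?_ (norm_nonneg _)
            refine norm_le_norm_of_abs_le_abs ?_
            have hsum_nonneg : 0 ≤ ∑ k ∈ Finset.range n, (T ^ k) x :=
              Finset.sum_nonneg fun k _ => hTk k hx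
            have hlk : ∀ k : ℕ, l ^ k = 1 ∨ l ^ k = -1 := by
              intro k
              rcases (abs_eq (by norm_num : (0:ℝ) ≤ 1)).mp hl with h | h
              · left; rw [h, one_pow]
              · rw [h]
                rcases Nat.even_or_odd k with he | ho
                · left; exact he.neg_one_pow
                · right; exact ho.neg_one_pow
            have h1 : |∑ k ∈ Finset.range n, l ^ k • (T ^ k) x| ≤ ∑ k ∈ Finset.range n, (T ^ k) x := by
              have habs : ∀ (f : ℕ → E), |∑ k ∈ Finset.range n, f k| ≤ ∑ k ∈ Finset.range n, |f k| := by
                intro f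
                induction (Finset.range n) using Finset.cons_induction with
                | empty => simp
                | cons a s ha ih =>
                  rw [Finset.sum_cons, Finset.sum_cons]
                  exact (abs_add_le _ _).trans (add_le_add le_rfl ih)
              refine (habs _).trans ?_
              refine Finset.sum_le_sum fun k _ => ?_
              rcases hlk k with h | h <;> rw [h]
              · rw [one_smul, abs_of_nonneg (hTk k hx)]
              · rw [neg_one_smul, abs_neg, abs_of_nonneg (hTk k hx)]
            rw [abs_of_nonneg hsum_nonneg]
            exact h1
    have htend : Tendsto (fun n : ℕ => ‖φ‖ * ‖(n : ℝ)⁻¹ • ∑ k ∈ Finset.range n, (T ^ k) x‖)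
        atTop (nhds 0) := by
      have := (hme x).norm
      simpa using this.const_mul ‖φ‖
    have hle : |φ x| ≤ 0 := by
      refine ge_of_tendsto htend ?_
      filter_upwards [eventually_gt_atTop 0] with n hn
      rcases hbound n with h | h
      · exact h
      · omega
    have := abs_nonneg (φ x)
    have : |φ x| = 0 := le_antisymm hle this
    exact abs_eq_zero.mp this
  ext x
  have hx : x = x⁺ - x⁻ := (posPart_sub_negPart x).symm
  rw [ContinuousLinearMap.zero_apply, hx, map_sub, key _ (posPart_nonneg x), key _ (negPart_nonneg x), sub_zero]
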